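/- Let n ≥ 1 and d ≥ 2 be integers and let A₁, …, Aₙ be real d×d matrices. Then E_{σ} ‖Σ_{i=1}^n σᵢ Aᵢ‖₂ ≤ 10 √(log d) · (Σ_{i=1}^n ‖Aᵢ‖₂²)^{1/2}, where σ = (σ₁,…,σₙ) is uniformly distributed on {−1,1}ⁿ. -/

import Mathlib

/-- The spectral norm `‖M‖₂ = max { uᵀ M v : ‖u‖₂ = ‖v‖₂ = 1 }` of a real `d × d` matrix. -/
noncomputable def specNorm {d : ℕ} (M : Matrix (Fin d) (Fin d) ℝ) : ℝ :=
  sSup {c : ℝ | ∃ u v : Fin d → ℝ, ∑ i, u i ^ 2 = 1 ∧ ∑ i, v i ^ 2 = 1 ∧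
    c = ∑ i, ∑ j, u i * M i j * v j}

set_option linter.unusedVariables false

namespace SpecAux

open Finset

variable {d : ℕ}

def SSet (M : Matrix (Fin d) (Fin d) ℝ) : Set ℝ :=
  {c : ℝ | ∃ u v : Fin d → ℝ, ∑ i, u i ^ 2 = 1 ∧ ∑ i, v i ^ 2 = 1 ∧
    c = ∑ i, ∑ j, u i * M i j * v j}

lemma specNorm_eq (M : Matrix (Fin d) (Fin d) ℝ) : specNorm M = sSup (SSet M) := rfl

/-- standard basis vector -/
def ebase (i : Fin d) : Fin d → ℝ := fun k => if k = i then 1 else 0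

lemma ebase_unit (i : Fin d) : ∑ k, ebase i k ^ 2 = 1 := by
  simp [ebase, apply_ite (fun x : ℝ => x ^ 2), Finset.sum_ite_eq']

lemma sq_le_of_mem {M : Matrix (Fin d) (Fin d) ℝ} {c : ℝ} (hc : c ∈ SSet M) :
    c ^ 2 ≤ ∑ i, ∑ j, M i j ^ 2 := by
  obtain ⟨u, v, hu, hv, rfl⟩ := hc
  have h1 : (∑ i, ∑ j, u i * M i j * v j) = ∑ i, u i * ∑ j, M i j * v j := by
    simp_rw [Finset.mul_sum, mul_assoc]
  rw [h1]
  calc (∑ i, u i * ∑ j, M i j * v j) ^ 2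
      ≤ (∑ i, u i ^ 2) * ∑ i, (∑ j, M i j * v j) ^ 2 :=
        Finset.sum_mul_sq_le_sq_mul_sq _ _ _
    _ = ∑ i, (∑ j, M i j * v j) ^ 2 := by rw [hu, one_mul]
    _ ≤ ∑ i, ∑ j, M i j ^ 2 := by
        refine Finset.sum_le_sum fun i _ => ?_
        calc (∑ j, M i j * v j) ^ 2 ≤ (∑ j, M i j ^ 2) * ∑ j, v j ^ 2 :=
              Finset.sum_mul_sq_le_sq_mul_sq _ _ _
          _ = ∑ j, M i j ^ 2 := by rw [hv, mul_one]

lemma le_of_mem {M : Matrix (Fin d) (Fin d) ℝ} {c : ℝ} (hc : c ∈ SSet M) :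
    c ≤ Real.sqrt (∑ i, ∑ j, M i j ^ 2) := by
  have := sq_le_of_mem hc
  calc c ≤ |c| := le_abs_self c
    _ = Real.sqrt (c ^ 2) := (Real.sqrt_sq_eq_abs c).symm
    _ ≤ _ := Real.sqrt_le_sqrt this

lemma bddAbove (M : Matrix (Fin d) (Fin d) ℝ) : BddAbove (SSet M) :=
  ⟨_, fun _ hc => le_of_mem hc⟩

lemma entry_mem [NeZero d] (M : Matrix (Fin d) (Fin d) ℝ) (i j : Fin d) :
    M i j ∈ SSet M := by
  refine ⟨ebase i, ebase j, ebase_unit i, ebase_unit j, ?_⟩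
  simp [ebase, ite_mul, Finset.sum_ite_eq']

lemma neg_entry_mem [NeZero d] (M : Matrix (Fin d) (Fin d) ℝ) (i j : Fin d) :
    -M i j ∈ SSet M := by
  refine ⟨ebase i, fun k => -ebase j k, ebase_unit i, by simpa using ebase_unit j, ?_⟩
  simp [ebase, ite_mul, mul_ite, Finset.sum_ite_eq']

lemma nonempty [NeZero d] (M : Matrix (Fin d) (Fin d) ℝ) : (SSet M).Nonempty :=
  ⟨_, entry_mem M 0 0⟩

lemma entry_le [NeZero d] (M : Matrix (Fin d) (Fin d) ℝ) (i j : Fin d) :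
    M i j ≤ specNorm M := le_csSup (bddAbove M) (entry_mem M i j)

lemma abs_entry_le [NeZero d] (M : Matrix (Fin d) (Fin d) ℝ) (i j : Fin d) :
    |M i j| ≤ specNorm M := by
  rcases abs_cases (M i j) with ⟨h, _⟩ | ⟨h, _⟩
  · rw [h]; exact entry_le M i j
  · rw [h]; exact le_csSup (bddAbove M) (neg_entry_mem M i j)

lemma specNorm_nonneg [NeZero d] (M : Matrix (Fin d) (Fin d) ℝ) : 0 ≤ specNorm M :=
  le_trans (abs_nonneg _) (abs_entry_le M 0 0)

lemma specNorm_le [NeZero d] {M : Matrix (Fin d) (Fin d) ℝ} {B : ℝ}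
    (h : ∀ u v : Fin d → ℝ, ∑ i, u i ^ 2 = 1 → ∑ i, v i ^ 2 = 1 →
      (∑ i, ∑ j, u i * M i j * v j) ≤ B) : specNorm M ≤ B := by
  refine csSup_le (nonempty M) ?_
  rintro c ⟨u, v, hu, hv, rfl⟩
  exact h u v hu hv

lemma mem_le [NeZero d] {M : Matrix (Fin d) (Fin d) ℝ} {c : ℝ} (hc : c ∈ SSet M) :
    c ≤ specNorm M := le_csSup (bddAbove M) hc

end SpecAux

namespace SpecAux

open Matrix

variable {d : ℕ}

lemma mulvec_sq_le [NeZero d] (M : Matrix (Fin d) (Fin d) ℝ) {v : Fin d → ℝ}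
    (hv : ∑ i, v i ^ 2 = 1) :
    ∑ i, (∑ j, M i j * v j) ^ 2 ≤ specNorm M ^ 2 := by
  suffices key : ∀ w : Fin d → ℝ, (∀ i, w i = ∑ j, M i j * v j) →
      ∑ i, w i ^ 2 ≤ specNorm M ^ 2 by
    exact key _ (fun i => rfl)
  intro w hwd
  by_cases h0 : ∑ i, w i ^ 2 = 0
  · rw [h0]; positivity
  · have hpos : 0 < ∑ i, w i ^ 2 :=
      (Finset.sum_nonneg fun i _ => sq_nonneg (w i)).lt_of_ne (Ne.symm h0)
    have hrpos : 0 < Real.sqrt (∑ i, w i ^ 2) := Real.sqrt_pos.2 hpos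
    have hr2 : Real.sqrt (∑ i, w i ^ 2) ^ 2 = ∑ i, w i ^ 2 := Real.sq_sqrt hpos.le
    have hmem : Real.sqrt (∑ i, w i ^ 2) ∈ SSet M := by
      refine ⟨fun i => w i / Real.sqrt (∑ i, w i ^ 2), v, ?_, hv, ?_⟩
      · simp_rw [div_pow, ← Finset.sum_div, hr2]
        field_simp
      · have h1 : ∀ i, ∑ j, (w i / Real.sqrt (∑ i, w i ^ 2)) * M i j * v j
            = w i ^ 2 / Real.sqrt (∑ i, w i ^ 2) := by
          intro i
          have : ∑ j, (w i / Real.sqrt (∑ i, w i ^ 2)) * M i j * v j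
              = (w i * ∑ j, M i j * v j) / Real.sqrt (∑ i, w i ^ 2) := by
            rw [Finset.mul_sum, Finset.sum_div]
            exact Finset.sum_congr rfl fun j _ => by ring
          rw [this, ← hwd i, pow_two]
        rw [Finset.sum_congr rfl fun i _ => h1 i, ← Finset.sum_div]
        rw [eq_div_iff (ne_of_gt hrpos), ← pow_two, hr2]
    have hle : Real.sqrt (∑ i, w i ^ 2) ≤ specNorm M := mem_le hmem
    calc ∑ i, w i ^ 2 = Real.sqrt (∑ i, w i ^ 2) ^ 2 := hr2.symm
      _ ≤ specNorm M ^ 2 := pow_le_pow_left₀ hrpos.le hle 2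

lemma specNorm_transpose [NeZero d] (M : Matrix (Fin d) (Fin d) ℝ) :
    specNorm Mᵀ = specNorm M := by
  have key : ∀ N : Matrix (Fin d) (Fin d) ℝ, specNorm Nᵀ ≤ specNorm N := by
    intro N
    refine specNorm_le fun u v hu hv => ?_
    refine mem_le ⟨v, u, hv, hu, ?_⟩
    rw [Finset.sum_comm]
    refine Finset.sum_congr rfl fun i _ => Finset.sum_congr rfl fun j _ => ?_
    rw [Matrix.transpose_apply]; ring
  refine le_antisymm (key M) ?_
  have := key Mᵀ
  rwa [Matrix.transpose_transpose] at this

lemma specNorm_mul_le [NeZero d] (M N : Matrix (Fin d) (Fin d) ℝ) :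
    specNorm (M * N) ≤ specNorm M * specNorm N := by
  refine specNorm_le fun u v hu hv => ?_
  have hrw : ∑ i, ∑ j, u i * (M * N) i j * v j
      = ∑ k, (∑ i, Mᵀ k i * u i) * (∑ j, N k j * v j) := by
    have lhs : ∑ i, ∑ j, u i * (M * N) i j * v j
        = ∑ i, ∑ k, ∑ j, u i * M i k * N k j * v j := by
      refine Finset.sum_congr rfl fun i _ => ?_
      rw [Finset.sum_comm]
      refine Finset.sum_congr rfl fun j _ => ?_
      rw [Matrix.mul_apply, Finset.mul_sum, Finset.sum_mul]
      exact Finset.sum_congr rfl fun k _ => by ring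
    have rhs : ∑ k, (∑ i, Mᵀ k i * u i) * (∑ j, N k j * v j)
        = ∑ k, ∑ i, ∑ j, u i * M i k * N k j * v j := by
      refine Finset.sum_congr rfl fun k _ => ?_
      rw [Finset.sum_mul_sum]
      refine Finset.sum_congr rfl fun i _ => Finset.sum_congr rfl fun j _ => by
        rw [Matrix.transpose_apply]; ring
    rw [lhs, rhs, Finset.sum_comm]
  rw [hrw]
  have h1 : ∑ k, (∑ i, Mᵀ k i * u i) ^ 2 ≤ specNorm M ^ 2 := by
    rw [← specNorm_transpose M]; exact mulvec_sq_le Mᵀ hu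
  have h2 : ∑ k, (∑ j, N k j * v j) ^ 2 ≤ specNorm N ^ 2 := mulvec_sq_le N hv
  calc ∑ k, (∑ i, Mᵀ k i * u i) * (∑ j, N k j * v j)
      ≤ |∑ k, (∑ i, Mᵀ k i * u i) * (∑ j, N k j * v j)| := le_abs_self _
    _ = Real.sqrt ((∑ k, (∑ i, Mᵀ k i * u i) * (∑ j, N k j * v j)) ^ 2) :=
        (Real.sqrt_sq_eq_abs _).symm
    _ ≤ Real.sqrt ((specNorm M ^ 2) * (specNorm N ^ 2)) := by
        refine Real.sqrt_le_sqrt ?_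
        calc (∑ k, (∑ i, Mᵀ k i * u i) * (∑ j, N k j * v j)) ^ 2
            ≤ (∑ k, (∑ i, Mᵀ k i * u i) ^ 2) * (∑ k, (∑ j, N k j * v j) ^ 2) :=
              Finset.sum_mul_sq_le_sq_mul_sq _ _ _
          _ ≤ specNorm M ^ 2 * (specNorm N ^ 2) :=
              mul_le_mul h1 h2 (Finset.sum_nonneg fun k _ => sq_nonneg _) (sq_nonneg _)
    _ = specNorm M * specNorm N := by
        rw [← mul_pow, Real.sqrt_sq (mul_nonneg (specNorm_nonneg M) (specNorm_nonneg N))]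

lemma specNorm_one_le [NeZero d] : specNorm (1 : Matrix (Fin d) (Fin d) ℝ) ≤ 1 := by
  refine specNorm_le fun u v hu hv => ?_
  have hrw : ∑ i, ∑ j, u i * (1 : Matrix (Fin d) (Fin d) ℝ) i j * v j = ∑ i, u i * v i := by
    refine Finset.sum_congr rfl fun i _ => ?_
    rw [Finset.sum_eq_single i]
    · simp [Matrix.one_apply]
    · intro j _ hj; simp [Matrix.one_apply, Ne.symm hj]
    · intro h; exact absurd (Finset.mem_univ i) h
  rw [hrw]
  calc ∑ i, u i * v i ≤ |∑ i, u i * v i| := le_abs_self _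
    _ = Real.sqrt ((∑ i, u i * v i) ^ 2) := (Real.sqrt_sq_eq_abs _).symm
    _ ≤ Real.sqrt 1 := Real.sqrt_le_sqrt (by
        calc (∑ i, u i * v i) ^ 2 ≤ (∑ i, u i ^ 2) * ∑ i, v i ^ 2 :=
            Finset.sum_mul_sq_le_sq_mul_sq _ _ _
          _ = 1 := by rw [hu, hv, one_mul])
    _ = 1 := Real.sqrt_one

lemma specNorm_list_prod_le [NeZero d] (l : List (Matrix (Fin d) (Fin d) ℝ)) :
    specNorm l.prod ≤ (l.map specNorm).prod := by
  induction l with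
  | nil => simpa using specNorm_one_le
  | cons h t ih =>
    rw [List.prod_cons, List.map_cons, List.prod_cons]
    calc specNorm (h * t.prod) ≤ specNorm h * specNorm t.prod := specNorm_mul_le _ _
      _ ≤ specNorm h * (t.map specNorm).prod :=
          mul_le_mul_of_nonneg_left ih (specNorm_nonneg h)

lemma trace_le [NeZero d] (M : Matrix (Fin d) (Fin d) ℝ) :
    Matrix.trace M ≤ d * specNorm M := by
  calc Matrix.trace M = ∑ i, M i i := rfl
    _ ≤ ∑ _i : Fin d, specNorm M := Finset.sum_le_sum fun i _ => entry_le M i i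
    _ = d * specNorm M := by rw [Finset.sum_const, Finset.card_univ, Fintype.card_fin,
        nsmul_eq_mul]

lemma specNorm_sym_sq_le [NeZero d] {M : Matrix (Fin d) (Fin d) ℝ} (hM : Mᵀ = M) :
    specNorm M ^ 2 ≤ specNorm (M * M) := by
  have key : specNorm M ≤ Real.sqrt (specNorm (M * M)) := by
    refine specNorm_le fun u v hu hv => ?_
    have hrw : ∑ i, ∑ j, u i * M i j * v j = ∑ i, u i * (∑ j, M i j * v j) := by
      refine Finset.sum_congr rfl fun i _ => ?_
      rw [Finset.mul_sum]
      exact Finset.sum_congr rfl fun j _ => by ring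
    have hmm : ∑ i, (∑ j, M i j * v j) ^ 2 = ∑ j, ∑ k, v j * (M * M) j k * v k := by
      simp_rw [pow_two, Finset.sum_mul, Finset.mul_sum, Matrix.mul_apply]
      rw [Finset.sum_comm]
      refine Finset.sum_congr rfl fun j _ => ?_
      rw [Finset.sum_comm]
      refine Finset.sum_congr rfl fun k _ => ?_
      rw [Finset.mul_sum, Finset.sum_mul]
      refine Finset.sum_congr rfl fun i _ => ?_
      have hsym : M i j = M j i := by conv_lhs => rw [← hM, Matrix.transpose_apply]
      rw [hsym]; ring
    have hmem : ∑ j, ∑ k, v j * (M * M) j k * v k ≤ specNorm (M * M) :=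
      mem_le ⟨v, v, hv, hv, rfl⟩
    have hsq : (∑ i, ∑ j, u i * M i j * v j) ^ 2 ≤ specNorm (M * M) := by
      rw [hrw]
      calc (∑ i, u i * (∑ j, M i j * v j)) ^ 2
          ≤ (∑ i, u i ^ 2) * ∑ i, (∑ j, M i j * v j) ^ 2 :=
            Finset.sum_mul_sq_le_sq_mul_sq _ _ _
        _ = ∑ i, (∑ j, M i j * v j) ^ 2 := by rw [hu, one_mul]
        _ ≤ specNorm (M * M) := by rw [hmm]; exact hmem
    calc ∑ i, ∑ j, u i * M i j * v j ≤ |∑ i, ∑ j, u i * M i j * v j| := le_abs_self _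
      _ = Real.sqrt ((∑ i, ∑ j, u i * M i j * v j) ^ 2) := (Real.sqrt_sq_eq_abs _).symm
      _ ≤ Real.sqrt (specNorm (M * M)) := Real.sqrt_le_sqrt hsq
  calc specNorm M ^ 2 ≤ Real.sqrt (specNorm (M * M)) ^ 2 :=
      pow_le_pow_left₀ (specNorm_nonneg M) key 2
    _ = specNorm (M * M) := Real.sq_sqrt (specNorm_nonneg _)

end SpecAux

namespace SpecAux

/-- Multinomial expansion of a product of sums in a noncommutative algebra. -/
lemma expand_prod {R : Type*} [Ring R] [Algebra ℝ R] {ι : Type*} [Fintype ι]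
    (s : ι → ℝ) : ∀ (m : ℕ) (C : Fin m → ι → R),
    (List.ofFn (fun k => ∑ i, s i • C k i)).prod
      = ∑ f : Fin m → ι, (∏ k, s (f k)) • (List.ofFn (fun k => C k (f k))).prod := by
  intro m
  induction m with
  | zero =>
    intro C
    rw [List.ofFn_zero, List.prod_nil]
    rw [Finset.sum_eq_single (fun k => (k.elim0 : ι))]
    · simp
    · intro f _ hf
      exact absurd (funext fun k => k.elim0) hf
    · intro h; exact absurd (Finset.mem_univ _) h
  | succ m ih =>
    intro C
    rw [List.ofFn_succ, List.prod_cons, ih (fun k => C k.succ), Finset.mul_sum]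
    have step : ∀ g : Fin m → ι,
        (∑ i, s i • C 0 i) * ((∏ k, s (g k)) • (List.ofFn (fun k => C k.succ (g k))).prod)
        = ∑ i, (s i * ∏ k, s (g k)) •
            (C 0 i * (List.ofFn (fun k => C k.succ (g k))).prod) := by
      intro g
      rw [Finset.sum_mul]
      refine Finset.sum_congr rfl fun i _ => ?_
      rw [smul_mul_assoc, mul_smul_comm, smul_smul]
    simp_rw [step]
    rw [Finset.sum_comm, ← Fintype.sum_prod_type']
    refine Fintype.sum_equiv (Fin.consEquiv (fun _ : Fin (m+1) => ι)) _ _ fun q => ?_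
    simp only [Fin.consEquiv_apply]
    rw [Fin.prod_univ_succ, List.ofFn_succ]
    simp only [Fin.cons_zero, Fin.cons_succ, List.prod_cons]

end SpecAux

namespace SpecAux

open Finset Nat

lemma coeff_nonneg {n : ℕ} {κ : Type*} [Fintype κ] [DecidableEq κ] (h : κ → Fin n) :
    0 ≤ ∑ σ : Fin n → Bool, ∏ k : κ, (if σ (h k) then (1:ℝ) else -1) := by
  have key : ∀ σ : Fin n → Bool, ∏ k : κ, (if σ (h k) then (1:ℝ) else -1)
      = ∏ j : Fin n, (if σ j then (1:ℝ) else -1)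
          ^ (Finset.univ.filter (fun k => h k = j)).card := by
    intro σ
    rw [← Finset.prod_fiberwise_of_maps_to (g := h) (fun k _ => Finset.mem_univ (h k))
      (fun k => if σ (h k) then (1:ℝ) else -1)]
    refine Finset.prod_congr rfl fun j _ => ?_
    have inner : (∏ k ∈ Finset.univ.filter (fun k => h k = j),
          (if σ (h k) then (1:ℝ) else -1))
        = ∏ _k ∈ Finset.univ.filter (fun k => h k = j), (if σ j then (1:ℝ) else -1) :=
      Finset.prod_congr rfl fun k hk => by rw [(Finset.mem_filter.1 hk).2]
    rw [inner, Finset.prod_const]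
  have swap := Fintype.prod_sum (κ := fun _ : Fin n => Bool)
    (fun j (b : Bool) => (if b then (1:ℝ) else -1)
      ^ (Finset.univ.filter (fun k => h k = j)).card)
  rw [Finset.sum_congr rfl fun σ _ => key σ, ← swap]
  refine Finset.prod_nonneg fun j _ => ?_
  rw [Fintype.sum_bool]
  have hF : (if (false = true) then (1:ℝ) else -1) = -1 := by norm_num
  have hT : (if (true = true) then (1:ℝ) else -1) = 1 := by norm_num
  rw [hF, hT, one_pow]
  rcases Nat.even_or_odd ((Finset.univ.filter (fun k => h k = j)).card) with he | ho
  · rw [he.neg_one_pow]; norm_num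
  · rw [ho.neg_one_pow]; norm_num

lemma mgf_le {n : ℕ} (a : Fin n → ℝ) (t : ℝ) :
    ∑ σ : Fin n → Bool, Real.exp (t * ∑ i, (if σ i then (1:ℝ) else -1) * a i)
      ≤ 2 ^ n * Real.exp (t ^ 2 * (∑ i, a i ^ 2) / 2) := by
  have h1 : ∀ σ : Fin n → Bool, Real.exp (t * ∑ i, (if σ i then (1:ℝ) else -1) * a i)
      = ∏ i, Real.exp (t * ((if σ i then (1:ℝ) else -1) * a i)) := by
    intro σ; rw [← Real.exp_sum, ← Finset.mul_sum]
  have swap := Fintype.prod_sum (κ := fun _ : Fin n => Bool)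
    (fun i (b : Bool) => Real.exp (t * ((if b then (1:ℝ) else -1) * a i)))
  rw [Finset.sum_congr rfl fun σ _ => h1 σ, ← swap]
  have h2 : ∀ i : Fin n, (∑ b : Bool, Real.exp (t * ((if b then (1:ℝ) else -1) * a i)))
      ≤ 2 * Real.exp (t ^ 2 * a i ^ 2 / 2) := by
    intro i
    rw [Fintype.sum_bool]
    have hF : (if (false = true) then (1:ℝ) else -1) = -1 := by norm_num
    have hT : (if (true = true) then (1:ℝ) else -1) = 1 := by norm_num
    rw [hF, hT]
    have e1 : t * ((1:ℝ) * a i) = t * a i := by ring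
    have e2 : t * ((-1:ℝ) * a i) = -(t * a i) := by ring
    have e3 : Real.exp (t * a i) + Real.exp (-(t * a i)) = 2 * Real.cosh (t * a i) := by
      rw [Real.cosh_eq]; ring
    rw [e1, e2, e3]
    have h4 := Real.cosh_le_exp_half_sq (t * a i)
    have e4 : (t * a i) ^ 2 / 2 = t ^ 2 * a i ^ 2 / 2 := by ring
    rw [e4] at h4
    linarith
  calc ∏ i, ∑ b : Bool, Real.exp (t * ((if b then (1:ℝ) else -1) * a i))
      ≤ ∏ i, 2 * Real.exp (t ^ 2 * a i ^ 2 / 2) := by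
        refine Finset.prod_le_prod (fun i _ => ?_) (fun i _ => h2 i)
        exact Finset.sum_nonneg fun b _ => (Real.exp_pos _).le
    _ = 2 ^ n * Real.exp (t ^ 2 * (∑ i, a i ^ 2) / 2) := by
        rw [Finset.prod_mul_distrib, Finset.prod_const, ← Real.exp_sum]
        congr 1
        · rw [Finset.card_univ, Fintype.card_fin]
        · congr 1
          rw [Finset.mul_sum, Finset.sum_div]

lemma pow_le_exp_add (x : ℝ) {t : ℝ} (ht : 0 < t) (m : ℕ) :
    x ^ (2*m) ≤ ((2*m)! : ℝ) / t ^ (2*m) * (Real.exp (t*x) + Real.exp (-(t*x))) := by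
  have h1 : (t*|x|) ^ (2*m) / ((2*m)! : ℝ) ≤ Real.exp (t*|x|) :=
    Real.pow_div_factorial_le_exp (x := t*|x|) (by positivity) (2*m)
  have h2 : Real.exp (t*|x|) ≤ Real.exp (t*x) + Real.exp (-(t*x)) := by
    rcases abs_cases x with ⟨hx, _⟩ | ⟨hx, _⟩
    · rw [hx]; linarith [(Real.exp_pos (-(t*x))).le]
    · rw [hx, mul_neg, ← neg_mul, neg_mul_comm]
      linarith [(Real.exp_pos (t*x)).le]
  have hfac : (0:ℝ) < ((2*m)! : ℝ) := by exact_mod_cast Nat.factorial_pos _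
  have h3 : t ^ (2*m) * |x| ^ (2*m) ≤ ((2*m)! : ℝ) * (Real.exp (t*x) + Real.exp (-(t*x))) := by
    calc t ^ (2*m) * |x| ^ (2*m) = (t*|x|) ^ (2*m) := (mul_pow _ _ _).symm
      _ ≤ ((2*m)! : ℝ) * Real.exp (t*|x|) :=
          ((div_le_iff₀ hfac).1 h1).trans_eq (mul_comm _ _)
      _ ≤ ((2*m)! : ℝ) * (Real.exp (t*x) + Real.exp (-(t*x))) :=
          mul_le_mul_of_nonneg_left h2 hfac.le
  have hx2 : x ^ (2*m) = |x| ^ (2*m) := by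
    rw [← abs_pow, abs_of_nonneg (by rw [mul_comm, pow_mul]; positivity)]
  rw [hx2, div_mul_eq_mul_div, le_div_iff₀ (by positivity : (0:ℝ) < t ^ (2*m)), mul_comm (|x| ^ (2*m))]
  exact h3

lemma sum_pow_le {n : ℕ} (a : Fin n → ℝ) {t : ℝ} (ht : 0 < t) (m : ℕ) :
    ∑ σ : Fin n → Bool, (∑ i, (if σ i then (1:ℝ) else -1) * a i) ^ (2*m)
      ≤ ((2*m)! : ℝ) / t ^ (2*m) * (2 * (2 ^ n * Real.exp (t ^ 2 * (∑ i, a i ^ 2) / 2))) := by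
  have step : ∀ σ : Fin n → Bool, (∑ i, (if σ i then (1:ℝ) else -1) * a i) ^ (2*m)
      ≤ ((2*m)! : ℝ) / t ^ (2*m) * (Real.exp (t * ∑ i, (if σ i then (1:ℝ) else -1) * a i)
          + Real.exp ((-t) * ∑ i, (if σ i then (1:ℝ) else -1) * a i)) := by
    intro σ
    have := pow_le_exp_add (∑ i, (if σ i then (1:ℝ) else -1) * a i) ht m
    rwa [← neg_mul] at this
  calc ∑ σ : Fin n → Bool, (∑ i, (if σ i then (1:ℝ) else -1) * a i) ^ (2*m)
      ≤ ∑ σ : Fin n → Bool, ((2*m)! : ℝ) / t ^ (2*m)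
          * (Real.exp (t * ∑ i, (if σ i then (1:ℝ) else -1) * a i)
            + Real.exp ((-t) * ∑ i, (if σ i then (1:ℝ) else -1) * a i)) :=
        Finset.sum_le_sum fun σ _ => step σ
    _ = ((2*m)! : ℝ) / t ^ (2*m) *
          ((∑ σ : Fin n → Bool, Real.exp (t * ∑ i, (if σ i then (1:ℝ) else -1) * a i))
          + ∑ σ : Fin n → Bool, Real.exp ((-t) * ∑ i, (if σ i then (1:ℝ) else -1) * a i)) := by
        rw [← Finset.mul_sum, Finset.sum_add_distrib]
    _ ≤ ((2*m)! : ℝ) / t ^ (2*m) * (2 * (2 ^ n * Real.exp (t ^ 2 * (∑ i, a i ^ 2) / 2))) := by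
        have hm1 := mgf_le a t
        have hm2 := mgf_le a (-t)
        rw [neg_pow, even_two.neg_one_pow, one_mul] at hm2
        have hnn : (0:ℝ) ≤ ((2*m)! : ℝ) / t ^ (2*m) := by positivity
        refine mul_le_mul_of_nonneg_left ?_ hnn
        linarith

end SpecAux

namespace SpecAux

open Finset Matrix

variable {n d : ℕ}

/-- sign of a boolean -/
noncomputable def sg (b : Bool) : ℝ := if b then (1:ℝ) else -1

lemma matrix_expand (A : Fin n → Matrix (Fin d) (Fin d) ℝ) (e : Fin n → ℝ) (p : ℕ) :
    ((∑ i, e i • A i)ᵀ * (∑ i, e i • A i)) ^ p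
      = ∑ f : Fin p → Fin n × Fin n,
          (∏ k, (e (f k).1 * e (f k).2)) •
            (List.ofFn (fun k => (A (f k).1)ᵀ * A (f k).2)).prod := by
  have hXt : (∑ i, e i • A i)ᵀ = ∑ i, e i • (A i)ᵀ := by
    rw [Matrix.transpose_sum]
    exact Finset.sum_congr rfl fun i _ => Matrix.transpose_smul _ _
  have hXX : (∑ i, e i • A i)ᵀ * (∑ i, e i • A i)
      = ∑ q : Fin n × Fin n, (e q.1 * e q.2) • ((A q.1)ᵀ * A q.2) := by
    rw [hXt, Finset.sum_mul_sum, Fintype.sum_prod_type]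
    exact Finset.sum_congr rfl fun i _ => Finset.sum_congr rfl fun j _ => by
      rw [smul_mul_assoc, mul_smul_comm, smul_smul]
  rw [hXX, ← List.prod_replicate, ← List.ofFn_const p,
    expand_prod (fun q : Fin n × Fin n => e q.1 * e q.2) p
      (fun _ q => (A q.1)ᵀ * A q.2)]

lemma scalar_expand (a : Fin n → ℝ) (e : Fin n → ℝ) (p : ℕ) :
    (∑ i, e i * a i) ^ (2 * p)
      = ∑ f : Fin p → Fin n × Fin n,
          (∏ k, (e (f k).1 * e (f k).2)) * ∏ k, (a (f k).1 * a (f k).2) := by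
  have hsq : (∑ i, e i * a i) ^ (2 * p) = ((∑ i, e i * a i) ^ 2) ^ p := by
    rw [← pow_mul]
  have hS2 : (∑ i, e i * a i) ^ 2
      = ∑ q : Fin n × Fin n, (e q.1 * e q.2) • (a q.1 * a q.2) := by
    rw [pow_two, Finset.sum_mul_sum, Fintype.sum_prod_type]
    exact Finset.sum_congr rfl fun i _ => Finset.sum_congr rfl fun j _ => by
      rw [smul_eq_mul]; ring
  rw [hsq, hS2, ← List.prod_replicate, ← List.ofFn_const p,
    expand_prod (R := ℝ) (fun q : Fin n × Fin n => e q.1 * e q.2) p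
      (fun _ q => a q.1 * a q.2)]
  refine Finset.sum_congr rfl fun f _ => ?_
  rw [smul_eq_mul, List.prod_ofFn]

lemma key_ineq [NeZero d] (A : Fin n → Matrix (Fin d) (Fin d) ℝ) (p : ℕ) :
    ∑ σ : Fin n → Bool,
        Matrix.trace (((∑ i, sg (σ i) • A i)ᵀ * (∑ i, sg (σ i) • A i)) ^ p)
      ≤ d * ∑ σ : Fin n → Bool, (∑ i, sg (σ i) * specNorm (A i)) ^ (2 * p) := by
  have lhs_eq : ∑ σ : Fin n → Bool,
      Matrix.trace (((∑ i, sg (σ i) • A i)ᵀ * (∑ i, sg (σ i) • A i)) ^ p)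
      = ∑ f : Fin p → Fin n × Fin n,
          (∑ σ : Fin n → Bool, ∏ k, (sg (σ (f k).1) * sg (σ (f k).2))) *
            Matrix.trace ((List.ofFn (fun k => (A (f k).1)ᵀ * A (f k).2)).prod) := by
    have step : ∀ σ : Fin n → Bool,
        Matrix.trace (((∑ i, sg (σ i) • A i)ᵀ * (∑ i, sg (σ i) • A i)) ^ p)
        = ∑ f : Fin p → Fin n × Fin n, (∏ k, (sg (σ (f k).1) * sg (σ (f k).2))) *
            Matrix.trace ((List.ofFn (fun k => (A (f k).1)ᵀ * A (f k).2)).prod) := by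
      intro σ
      rw [matrix_expand A (fun i => sg (σ i)) p, Matrix.trace_sum]
      refine Finset.sum_congr rfl fun f _ => ?_
      rw [Matrix.trace_smul, smul_eq_mul]
    rw [Finset.sum_congr rfl fun σ _ => step σ, Finset.sum_comm]
    exact Finset.sum_congr rfl fun f _ => (Finset.sum_mul _ _ _).symm
  have rhs_eq : ∑ σ : Fin n → Bool, (∑ i, sg (σ i) * specNorm (A i)) ^ (2 * p)
      = ∑ f : Fin p → Fin n × Fin n,
          (∑ σ : Fin n → Bool, ∏ k, (sg (σ (f k).1) * sg (σ (f k).2))) *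
            ∏ k, (specNorm (A (f k).1) * specNorm (A (f k).2)) := by
    have step : ∀ σ : Fin n → Bool, (∑ i, sg (σ i) * specNorm (A i)) ^ (2 * p)
        = ∑ f : Fin p → Fin n × Fin n, (∏ k, (sg (σ (f k).1) * sg (σ (f k).2))) *
            ∏ k, (specNorm (A (f k).1) * specNorm (A (f k).2)) := by
      intro σ
      exact scalar_expand (fun i => specNorm (A i)) (fun i => sg (σ i)) p
    rw [Finset.sum_congr rfl fun σ _ => step σ, Finset.sum_comm]
    exact Finset.sum_congr rfl fun f _ => (Finset.sum_mul _ _ _).symm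
  have hK : ∀ f : Fin p → Fin n × Fin n,
      0 ≤ ∑ σ : Fin n → Bool, ∏ k, (sg (σ (f k).1) * sg (σ (f k).2)) := by
    intro f
    have h0 := coeff_nonneg (n := n) (κ := Fin p ⊕ Fin p)
      (Sum.elim (fun k => (f k).1) (fun k => (f k).2))
    refine le_of_le_of_eq h0 (Finset.sum_congr rfl fun σ _ => ?_)
    rw [Fintype.prod_sum_type, ← Finset.prod_mul_distrib]
    rfl
  have htr : ∀ f : Fin p → Fin n × Fin n,
      Matrix.trace ((List.ofFn (fun k => (A (f k).1)ᵀ * A (f k).2)).prod)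
      ≤ d * ∏ k, (specNorm (A (f k).1) * specNorm (A (f k).2)) := by
    intro f
    calc Matrix.trace ((List.ofFn (fun k => (A (f k).1)ᵀ * A (f k).2)).prod)
        ≤ d * specNorm ((List.ofFn (fun k => (A (f k).1)ᵀ * A (f k).2)).prod) :=
          trace_le _
      _ ≤ d * ∏ k, (specNorm (A (f k).1) * specNorm (A (f k).2)) := by
          refine mul_le_mul_of_nonneg_left ?_ (by positivity)
          calc specNorm ((List.ofFn (fun k => (A (f k).1)ᵀ * A (f k).2)).prod)
              ≤ ((List.ofFn (fun k => (A (f k).1)ᵀ * A (f k).2)).map specNorm).prod :=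
                specNorm_list_prod_le _
            _ = ∏ k, specNorm ((A (f k).1)ᵀ * A (f k).2) := by
                rw [List.map_ofFn, List.prod_ofFn]; rfl
            _ ≤ ∏ k, (specNorm (A (f k).1) * specNorm (A (f k).2)) := by
                refine Finset.prod_le_prod (fun k _ => specNorm_nonneg _) fun k _ => ?_
                calc specNorm ((A (f k).1)ᵀ * A (f k).2)
                    ≤ specNorm (A (f k).1)ᵀ * specNorm (A (f k).2) := specNorm_mul_le _ _
                  _ = specNorm (A (f k).1) * specNorm (A (f k).2) := by
                      rw [specNorm_transpose]
  calc ∑ σ : Fin n → Bool,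
        Matrix.trace (((∑ i, sg (σ i) • A i)ᵀ * (∑ i, sg (σ i) • A i)) ^ p)
      = ∑ f : Fin p → Fin n × Fin n,
          (∑ σ : Fin n → Bool, ∏ k, (sg (σ (f k).1) * sg (σ (f k).2))) *
            Matrix.trace ((List.ofFn (fun k => (A (f k).1)ᵀ * A (f k).2)).prod) := lhs_eq
    _ ≤ ∑ f : Fin p → Fin n × Fin n,
          (∑ σ : Fin n → Bool, ∏ k, (sg (σ (f k).1) * sg (σ (f k).2))) *
            (d * ∏ k, (specNorm (A (f k).1) * specNorm (A (f k).2))) :=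
        Finset.sum_le_sum fun f _ => mul_le_mul_of_nonneg_left (htr f) (hK f)
    _ = d * ∑ f : Fin p → Fin n × Fin n,
          (∑ σ : Fin n → Bool, ∏ k, (sg (σ (f k).1) * sg (σ (f k).2))) *
            ∏ k, (specNorm (A (f k).1) * specNorm (A (f k).2)) := by
        rw [Finset.mul_sum]
        exact Finset.sum_congr rfl fun f _ => by ring
    _ = d * ∑ σ : Fin n → Bool, (∑ i, sg (σ i) * specNorm (A i)) ^ (2 * p) := by
        rw [rhs_eq]

end SpecAux

namespace SpecAux

open Finset Matrix

variable {d : ℕ}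

lemma specNorm_sq_le' [NeZero d] (X : Matrix (Fin d) (Fin d) ℝ) :
    specNorm X ^ 2 ≤ specNorm (Xᵀ * X) := by
  have key : specNorm X ≤ Real.sqrt (specNorm (Xᵀ * X)) := by
    refine specNorm_le fun u v hu hv => ?_
    have hrw : ∑ i, ∑ j, u i * X i j * v j = ∑ i, u i * (∑ j, X i j * v j) := by
      refine Finset.sum_congr rfl fun i _ => ?_
      rw [Finset.mul_sum]
      exact Finset.sum_congr rfl fun j _ => by ring
    have hmm : ∑ i, (∑ j, X i j * v j) ^ 2 = ∑ j, ∑ k, v j * (Xᵀ * X) j k * v k := by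
      simp_rw [pow_two, Finset.sum_mul, Finset.mul_sum, Matrix.mul_apply,
        Matrix.transpose_apply]
      rw [Finset.sum_comm]
      refine Finset.sum_congr rfl fun j _ => ?_
      rw [Finset.sum_comm]
      refine Finset.sum_congr rfl fun k _ => ?_
      rw [Finset.mul_sum, Finset.sum_mul]
      exact Finset.sum_congr rfl fun i _ => by ring
    have hmem : ∑ j, ∑ k, v j * (Xᵀ * X) j k * v k ≤ specNorm (Xᵀ * X) :=
      mem_le ⟨v, v, hv, hv, rfl⟩
    have hsq : (∑ i, ∑ j, u i * X i j * v j) ^ 2 ≤ specNorm (Xᵀ * X) := by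
      rw [hrw]
      calc (∑ i, u i * (∑ j, X i j * v j)) ^ 2
          ≤ (∑ i, u i ^ 2) * ∑ i, (∑ j, X i j * v j) ^ 2 :=
            Finset.sum_mul_sq_le_sq_mul_sq _ _ _
        _ = ∑ i, (∑ j, X i j * v j) ^ 2 := by rw [hu, one_mul]
        _ ≤ specNorm (Xᵀ * X) := by rw [hmm]; exact hmem
    calc ∑ i, ∑ j, u i * X i j * v j ≤ |∑ i, ∑ j, u i * X i j * v j| := le_abs_self _
      _ = Real.sqrt ((∑ i, ∑ j, u i * X i j * v j) ^ 2) := (Real.sqrt_sq_eq_abs _).symm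
      _ ≤ Real.sqrt (specNorm (Xᵀ * X)) := Real.sqrt_le_sqrt hsq
  calc specNorm X ^ 2 ≤ Real.sqrt (specNorm (Xᵀ * X)) ^ 2 :=
      pow_le_pow_left₀ (specNorm_nonneg X) key 2
    _ = specNorm (Xᵀ * X) := Real.sq_sqrt (specNorm_nonneg _)

lemma sym_pow_le [NeZero d] {B : Matrix (Fin d) (Fin d) ℝ} (hB : Bᵀ = B) (k : ℕ) :
    specNorm B ^ (2 ^ k) ≤ specNorm (B ^ (2 ^ k)) := by
  induction k with
  | zero => simp
  | succ k ih =>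
    have hYt : (B ^ (2 ^ k))ᵀ = B ^ (2 ^ k) := by
      rw [Matrix.transpose_pow, hB]
    calc specNorm B ^ (2 ^ (k+1)) = (specNorm B ^ (2 ^ k)) ^ 2 := by
          rw [← pow_mul, pow_succ]
      _ ≤ specNorm (B ^ (2 ^ k)) ^ 2 :=
          pow_le_pow_left₀ (pow_nonneg (specNorm_nonneg B) _) ih 2
      _ ≤ specNorm ((B ^ (2 ^ k))ᵀ * B ^ (2 ^ k)) := specNorm_sq_le' _
      _ = specNorm (B ^ (2 ^ (k+1))) := by
          rw [hYt, ← pow_add]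
          congr 1
          ring

lemma specNorm_conj_le_trace [NeZero d] (Y : Matrix (Fin d) (Fin d) ℝ) :
    specNorm (Yᵀ * Y) ≤ Matrix.trace (Yᵀ * Y) := by
  have htr : Matrix.trace (Yᵀ * Y) = ∑ j, ∑ k, Y k j ^ 2 := by
    rw [Matrix.trace]
    refine Finset.sum_congr rfl fun j _ => ?_
    rw [Matrix.diag_apply, Matrix.mul_apply]
    exact Finset.sum_congr rfl fun k _ => by
      rw [Matrix.transpose_apply, pow_two]
  refine specNorm_le fun u v hu hv => ?_
  have hrw : ∑ i, ∑ j, u i * (Yᵀ * Y) i j * v j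
      = ∑ k, (∑ i, Y k i * u i) * (∑ j, Y k j * v j) := by
    have lhs : ∑ i, ∑ j, u i * (Yᵀ * Y) i j * v j
        = ∑ i, ∑ k, ∑ j, u i * Y k i * Y k j * v j := by
      refine Finset.sum_congr rfl fun i _ => ?_
      rw [Finset.sum_comm]
      refine Finset.sum_congr rfl fun j _ => ?_
      rw [Matrix.mul_apply, Finset.mul_sum, Finset.sum_mul]
      refine Finset.sum_congr rfl fun k _ => by rw [Matrix.transpose_apply]; ring
    have rhs : ∑ k, (∑ i, Y k i * u i) * (∑ j, Y k j * v j)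
        = ∑ k, ∑ i, ∑ j, u i * Y k i * Y k j * v j := by
      refine Finset.sum_congr rfl fun k _ => ?_
      rw [Finset.sum_mul_sum]
      exact Finset.sum_congr rfl fun i _ => Finset.sum_congr rfl fun j _ => by ring
    rw [lhs, rhs, Finset.sum_comm]
  rw [hrw, htr]
  have hu' : ∑ k, (∑ i, Y k i * u i) ^ 2 ≤ ∑ j, ∑ k, Y k j ^ 2 := by
    rw [Finset.sum_comm]
    refine Finset.sum_le_sum fun k _ => ?_
    calc (∑ i, Y k i * u i) ^ 2 ≤ (∑ i, Y k i ^ 2) * ∑ i, u i ^ 2 :=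
        Finset.sum_mul_sq_le_sq_mul_sq _ _ _
      _ = ∑ i, Y k i ^ 2 := by rw [hu, mul_one]
  have hv' : ∑ k, (∑ j, Y k j * v j) ^ 2 ≤ ∑ j, ∑ k, Y k j ^ 2 := by
    rw [Finset.sum_comm]
    refine Finset.sum_le_sum fun k _ => ?_
    calc (∑ j, Y k j * v j) ^ 2 ≤ (∑ j, Y k j ^ 2) * ∑ j, v j ^ 2 :=
        Finset.sum_mul_sq_le_sq_mul_sq _ _ _
      _ = ∑ j, Y k j ^ 2 := by rw [hv, mul_one]
  have hnn : (0:ℝ) ≤ ∑ j, ∑ k, Y k j ^ 2 := by positivity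
  calc ∑ k, (∑ i, Y k i * u i) * (∑ j, Y k j * v j)
      ≤ |∑ k, (∑ i, Y k i * u i) * (∑ j, Y k j * v j)| := le_abs_self _
    _ = Real.sqrt ((∑ k, (∑ i, Y k i * u i) * (∑ j, Y k j * v j)) ^ 2) :=
        (Real.sqrt_sq_eq_abs _).symm
    _ ≤ Real.sqrt ((∑ j, ∑ k, Y k j ^ 2) * (∑ j, ∑ k, Y k j ^ 2)) := by
        refine Real.sqrt_le_sqrt ?_
        calc (∑ k, (∑ i, Y k i * u i) * (∑ j, Y k j * v j)) ^ 2
            ≤ (∑ k, (∑ i, Y k i * u i) ^ 2) * (∑ k, (∑ j, Y k j * v j) ^ 2) :=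
              Finset.sum_mul_sq_le_sq_mul_sq _ _ _
          _ ≤ (∑ j, ∑ k, Y k j ^ 2) * (∑ j, ∑ k, Y k j ^ 2) :=
              mul_le_mul hu' hv' (Finset.sum_nonneg fun k _ => sq_nonneg _) hnn
    _ = ∑ j, ∑ k, Y k j ^ 2 := by
        rw [← pow_two, Real.sqrt_sq hnn]

lemma spec_pow_le_trace [NeZero d] (X : Matrix (Fin d) (Fin d) ℝ) (k : ℕ) :
    specNorm X ^ (2 * 2 ^ k) ≤ Matrix.trace ((Xᵀ * X) ^ (2 ^ k)) := by
  have hB : (Xᵀ * X)ᵀ = Xᵀ * X := by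
    rw [Matrix.transpose_mul, Matrix.transpose_transpose]
  have h1 : specNorm X ^ (2 * 2 ^ k) ≤ specNorm ((Xᵀ * X) ^ (2 ^ k)) := by
    calc specNorm X ^ (2 * 2 ^ k) = (specNorm X ^ 2) ^ (2 ^ k) := by rw [pow_mul]
      _ ≤ specNorm (Xᵀ * X) ^ (2 ^ k) :=
          pow_le_pow_left₀ (by positivity) (specNorm_sq_le' X) _
      _ ≤ specNorm ((Xᵀ * X) ^ (2 ^ k)) := sym_pow_le hB k
  refine h1.trans ?_
  cases k with
  | zero =>
    simpa using specNorm_conj_le_trace X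
  | succ k =>
    have hsplit : (Xᵀ * X) ^ (2 ^ (k+1))
        = ((Xᵀ * X) ^ (2 ^ k))ᵀ * (Xᵀ * X) ^ (2 ^ k) := by
      rw [Matrix.transpose_pow, hB, ← pow_add]
      congr 1
      ring
    rw [hsplit]
    exact specNorm_conj_le_trace _

end SpecAux

namespace SpecAux

open Finset Nat

lemma exists_p {d : ℕ} (hd : 2 ≤ d) :
    ∃ k : ℕ, Real.log d ≤ ((2^k : ℕ) : ℝ) ∧ ((2^k : ℕ) : ℝ) ≤ 2 * Real.log d := by
  have hlog2 : (0.6931471803 : ℝ) < Real.log 2 := Real.log_two_gt_d9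
  have hlogd : Real.log 2 ≤ Real.log d :=
    Real.log_le_log (by norm_num) (by exact_mod_cast hd)
  have hex : ∃ k : ℕ, Real.log d ≤ ((2^k : ℕ) : ℝ) := by
    refine ⟨d, ?_⟩
    have h1 : Real.log d ≤ (d:ℝ) - 1 :=
      Real.log_le_sub_one_of_pos (by positivity)
    have h2 : (d:ℝ) < ((2^d : ℕ) : ℝ) := by exact_mod_cast (Nat.lt_two_pow_self (n := d))
    linarith
  classical
  refine ⟨Nat.find hex, Nat.find_spec hex, ?_⟩
  rcases Nat.eq_zero_or_pos (Nat.find hex) with h0 | hpos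
  · rw [h0]
    have h1 : ((2^0 : ℕ) : ℝ) = 1 := by norm_num
    rw [h1]
    linarith
  · have hmin := Nat.find_min hex (Nat.sub_lt hpos one_pos)
    push_neg at hmin
    have heq : Nat.find hex = (Nat.find hex - 1) + 1 := by omega
    have hsplit : ((2 ^ Nat.find hex : ℕ) : ℝ)
        = 2 * ((2 ^ (Nat.find hex - 1) : ℕ) : ℝ) := by
      conv_lhs => rw [heq]
      push_cast
      rw [pow_succ]
      ring
    rw [hsplit]
    linarith

lemma numeric {d P : ℕ} (hd : 2 ≤ d) (hP : 1 ≤ P) (hP1 : Real.log d ≤ (P:ℝ))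
    (hP2 : (P:ℝ) ≤ 2 * Real.log d) :
    2 * (d:ℝ) * (((2*P)! : ℕ) : ℝ) * Real.exp P
      ≤ (100 * Real.log d * (2*(P:ℝ))) ^ P := by
  have hlog2 : (0.6931471803 : ℝ) < Real.log 2 := Real.log_two_gt_d9
  have hlogd : Real.log 2 ≤ Real.log d :=
    Real.log_le_log (by norm_num) (by exact_mod_cast hd)
  have hlogpos : (0:ℝ) < Real.log d := by linarith
  have he : Real.exp 1 < 2.7182818286 := Real.exp_one_lt_d9
  have hepos : (0:ℝ) < Real.exp 1 := Real.exp_pos 1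
  have h2 : (2:ℝ) ≤ 2 ^ P := by
    calc (2:ℝ) = 2 ^ 1 := (pow_one 2).symm
      _ ≤ 2 ^ P := pow_le_pow_right₀ (by norm_num) hP
  have hD : (d:ℝ) ≤ Real.exp 1 ^ P := by
    rw [Real.exp_one_pow]
    calc (d:ℝ) = Real.exp (Real.log d) := (Real.exp_log (by positivity)).symm
      _ ≤ Real.exp P := Real.exp_le_exp.2 hP1
  have hfac : (((2*P)! : ℕ) : ℝ) ≤ ((2*(P:ℝ)) ^ 2) ^ P := by
    have h1 : ((2*P)! : ℕ) ≤ (2*P) ^ (2*P) := Nat.factorial_le_pow _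
    have h2 : (((2*P) ^ (2*P) : ℕ) : ℝ) = ((2*(P:ℝ)) ^ 2) ^ P := by
      push_cast
      rw [← pow_mul]
    calc (((2*P)! : ℕ) : ℝ) ≤ (((2*P) ^ (2*P) : ℕ) : ℝ) := by exact_mod_cast h1
      _ = ((2*(P:ℝ)) ^ 2) ^ P := h2
  have hexpP : Real.exp (P:ℝ) = Real.exp 1 ^ P := by rw [Real.exp_one_pow]
  have base : 2 * (Real.exp 1 * Real.exp 1) * ((2*(P:ℝ)) ^ 2)
      ≤ 100 * Real.log d * (2*(P:ℝ)) := by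
    have hPpos : (0:ℝ) < (P:ℝ) := by exact_mod_cast hP
    have h2Ppos : (0:ℝ) < 2*(P:ℝ) := by positivity
    have hP4 : 2*(P:ℝ) ≤ 4 * Real.log d := by linarith
    have he2 : Real.exp 1 * Real.exp 1 ≤ 7.4 := by nlinarith
    calc 2 * (Real.exp 1 * Real.exp 1) * ((2*(P:ℝ)) ^ 2)
        ≤ 2 * 7.4 * ((2*(P:ℝ)) ^ 2) := by
          nlinarith [mul_le_mul_of_nonneg_right he2 (sq_nonneg (2*(P:ℝ)))]
      _ = 14.8 * ((2*(P:ℝ)) * (2*(P:ℝ))) := by ring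
      _ ≤ 14.8 * ((4 * Real.log d) * (2*(P:ℝ))) := by
          refine mul_le_mul_of_nonneg_left ?_ (by norm_num)
          exact mul_le_mul_of_nonneg_right hP4 h2Ppos.le
      _ = 59.2 * Real.log d * (2*(P:ℝ)) := by ring
      _ ≤ 100 * Real.log d * (2*(P:ℝ)) := by
          refine mul_le_mul_of_nonneg_right ?_ h2Ppos.le
          nlinarith
  calc 2 * (d:ℝ) * (((2*P)! : ℕ) : ℝ) * Real.exp P
      ≤ (2 ^ P) * (Real.exp 1 ^ P) * (((2*(P:ℝ)) ^ 2) ^ P) * (Real.exp 1 ^ P) := by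
        rw [hexpP]
        have hdpos : (0:ℝ) ≤ (d:ℝ) := by positivity
        have hfpos : (0:ℝ) ≤ (((2*P)! : ℕ) : ℝ) := by positivity
        have hq : (0:ℝ) ≤ Real.exp 1 ^ P := by positivity
        refine mul_le_mul (mul_le_mul (mul_le_mul h2 hD hdpos (by positivity))
          hfac hfpos (by positivity)) le_rfl hq (by positivity)
    _ = (2 * (Real.exp 1 * Real.exp 1) * ((2*(P:ℝ)) ^ 2)) ^ P := by
        rw [mul_pow, mul_pow, mul_pow]
        ring
    _ ≤ (100 * Real.log d * (2*(P:ℝ))) ^ P := by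
        refine pow_le_pow_left₀ ?_ base P
        positivity

end SpecAux

namespace SpecAux

lemma specNorm_zero {d : ℕ} [NeZero d] : specNorm (0 : Matrix (Fin d) (Fin d) ℝ) = 0 := by
  refine le_antisymm (specNorm_le fun u v hu hv => ?_) (specNorm_nonneg 0)
  simp

end SpecAux

open SpecAux Nat Matrix in
/-- Non-commutative Khintchine inequality (Theorem 3):
`𝔼_σ ‖∑ σ_i A_i‖₂ ≤ 10 √(log d) (∑ ‖A_i‖₂²)^{1/2}`. -/
theorem noncommutative_khintchine (n d : ℕ) (hn : 1 ≤ n) (hd : 2 ≤ d)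
    (A : Fin n → Matrix (Fin d) (Fin d) ℝ) :
    (1 / 2 ^ n : ℝ) *
        ∑ σ : Fin n → Bool,
          specNorm (∑ i, (if σ i then (1 : ℝ) else -1) • A i) ≤
      10 * Real.sqrt (Real.log d) * Real.sqrt (∑ i, specNorm (A i) ^ 2) := by
  haveI : NeZero d := ⟨by omega⟩
  have hsa0 : (0:ℝ) ≤ ∑ i, specNorm (A i) ^ 2 := by positivity
  rcases eq_or_lt_of_le hsa0 with h0 | hpos
  · -- degenerate case : all matrices are zero
    have hAi : ∀ i, specNorm (A i) = 0 := by
      intro i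
      have h1 : specNorm (A i) ^ 2 = 0 :=
        (Finset.sum_eq_zero_iff_of_nonneg (fun i _ => sq_nonneg _)).1 h0.symm i
          (Finset.mem_univ i)
      exact (pow_eq_zero_iff (by norm_num : (2:ℕ) ≠ 0)).1 h1
    have hA : ∀ i, A i = 0 := by
      intro i
      ext j l
      have h2 := abs_entry_le (A i) j l
      rw [hAi i] at h2
      have h3 := abs_nonneg (A i j l)
      simpa using abs_eq_zero.1 (le_antisymm h2 h3)
    have lhs0 : (1 / 2 ^ n : ℝ) *
        ∑ σ : Fin n → Bool, specNorm (∑ i, (if σ i then (1 : ℝ) else -1) • A i) = 0 := by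
      have hz : ∀ σ : Fin n → Bool,
          specNorm (∑ i, (if σ i then (1 : ℝ) else -1) • A i) = 0 := by
        intro σ
        have : (∑ i, (if σ i then (1 : ℝ) else -1) • A i) = 0 :=
          Finset.sum_eq_zero fun i _ => by rw [hA i, smul_zero]
        rw [this, specNorm_zero]
      rw [Finset.sum_congr rfl fun σ _ => hz σ, Finset.sum_const_zero, mul_zero]
    rw [lhs0, ← h0, Real.sqrt_zero, mul_zero]
  · -- main case
    obtain ⟨k, hk1, hk2⟩ := exists_p hd
    have hq1 : 1 ≤ 2 ^ k := Nat.one_le_two_pow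
    have hqR : (0:ℝ) < ((2^k : ℕ) : ℝ) := by positivity
    have htpos : (0:ℝ) < 2 * ((2^k : ℕ) : ℝ) / (∑ i, specNorm (A i) ^ 2) := by positivity
    have ht : 0 < Real.sqrt (2 * ((2^k : ℕ) : ℝ) / (∑ i, specNorm (A i) ^ 2)) :=
      Real.sqrt_pos.2 htpos
    have ht2 : Real.sqrt (2 * ((2^k : ℕ) : ℝ) / (∑ i, specNorm (A i) ^ 2)) ^ 2
        = 2 * ((2^k : ℕ) : ℝ) / (∑ i, specNorm (A i) ^ 2) := Real.sq_sqrt htpos.le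
    have hlogpos : (0:ℝ) < Real.log d := by
      have := Real.log_two_gt_d9
      have h2 : Real.log 2 ≤ Real.log d :=
        Real.log_le_log (by norm_num) (by exact_mod_cast hd)
      linarith
    -- abbreviations (purely for readability of this proof script)
    have hcard : (Finset.univ : Finset (Fin n → Bool)).card = 2 ^ n := by
      rw [Finset.card_univ]
      simp [Fintype.card_fun]
    have hw' : ∑ _σ : Fin n → Bool, (1 / 2 ^ n : ℝ) = 1 := by
      rw [Finset.sum_const, hcard, nsmul_eq_mul]
      push_cast
      rw [mul_one_div, div_self (by positivity)]
    have jensen := Real.pow_arith_mean_le_arith_mean_pow Finset.univ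
      (fun _ => (1 / 2 ^ n : ℝ))
      (fun σ => specNorm (∑ i, (if σ i then (1 : ℝ) else -1) • A i))
      (fun σ _ => by positivity) hw' (fun σ _ => specNorm_nonneg _) (2 * 2 ^ k)
    have hfin : ((1 / 2 ^ n : ℝ) *
        ∑ σ : Fin n → Bool, specNorm (∑ i, (if σ i then (1 : ℝ) else -1) • A i)) ^ (2 * 2 ^ k)
        ≤ (10 * Real.sqrt (Real.log d) * Real.sqrt (∑ i, specNorm (A i) ^ 2)) ^ (2 * 2 ^ k) := by
      calc ((1 / 2 ^ n : ℝ) *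
          ∑ σ : Fin n → Bool, specNorm (∑ i, (if σ i then (1 : ℝ) else -1) • A i)) ^ (2 * 2 ^ k)
          = (∑ σ : Fin n → Bool, (1 / 2 ^ n : ℝ) *
              specNorm (∑ i, (if σ i then (1 : ℝ) else -1) • A i)) ^ (2 * 2 ^ k) := by
            rw [Finset.mul_sum]
        _ ≤ ∑ σ : Fin n → Bool, (1 / 2 ^ n : ℝ) *
              specNorm (∑ i, (if σ i then (1 : ℝ) else -1) • A i) ^ (2 * 2 ^ k) := jensen
        _ = (1 / 2 ^ n : ℝ) * ∑ σ : Fin n → Bool,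
              specNorm (∑ i, (if σ i then (1 : ℝ) else -1) • A i) ^ (2 * 2 ^ k) :=
            (Finset.mul_sum _ _ _).symm
        _ ≤ (1 / 2 ^ n : ℝ) * ∑ σ : Fin n → Bool, Matrix.trace
              ((((∑ i, (if σ i then (1 : ℝ) else -1) • A i))ᵀ *
                (∑ i, (if σ i then (1 : ℝ) else -1) • A i)) ^ (2 ^ k)) := by
            refine mul_le_mul_of_nonneg_left (Finset.sum_le_sum fun σ _ => ?_) (by positivity)
            exact spec_pow_le_trace _ k
        _ ≤ (1 / 2 ^ n : ℝ) * (d * ∑ σ : Fin n → Bool,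
              (∑ i, (if σ i then (1 : ℝ) else -1) * specNorm (A i)) ^ (2 * 2 ^ k)) := by
            refine mul_le_mul_of_nonneg_left ?_ (by positivity)
            exact key_ineq A (2 ^ k)
        _ ≤ (1 / 2 ^ n : ℝ) * (d * ((((2 * 2 ^ k)! : ℕ) : ℝ) /
              Real.sqrt (2 * ((2^k : ℕ) : ℝ) / (∑ i, specNorm (A i) ^ 2)) ^ (2 * 2 ^ k) *
              (2 * (2 ^ n * Real.exp
                (Real.sqrt (2 * ((2^k : ℕ) : ℝ) / (∑ i, specNorm (A i) ^ 2)) ^ 2 *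
                  (∑ i, specNorm (A i) ^ 2) / 2))))) := by
            refine mul_le_mul_of_nonneg_left (mul_le_mul_of_nonneg_left ?_ (by positivity))
              (by positivity)
            exact sum_pow_le (fun i => specNorm (A i)) ht (2 ^ k)
        _ ≤ (10 * Real.sqrt (Real.log d) * Real.sqrt (∑ i, specNorm (A i) ^ 2)) ^ (2 * 2 ^ k) := by
            have harg : Real.sqrt (2 * ((2^k : ℕ) : ℝ) / (∑ i, specNorm (A i) ^ 2)) ^ 2 *
                (∑ i, specNorm (A i) ^ 2) / 2 = ((2^k : ℕ) : ℝ) := by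
              rw [ht2]
              field_simp
            have hT : Real.sqrt (2 * ((2^k : ℕ) : ℝ) / (∑ i, specNorm (A i) ^ 2)) ^ (2 * 2 ^ k)
                = (2 * ((2^k : ℕ) : ℝ))^(2^k) / (∑ i, specNorm (A i) ^ 2)^(2^k) := by
              rw [pow_mul, ht2, div_pow]
            rw [harg, hT]
            have hLHSeq : (1 / 2 ^ n : ℝ) * (d * ((((2 * 2 ^ k)! : ℕ) : ℝ) /
                ((2 * ((2^k : ℕ) : ℝ))^(2^k) / (∑ i, specNorm (A i) ^ 2)^(2^k)) *
                (2 * (2 ^ n * Real.exp ((2^k : ℕ) : ℝ)))))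
                = (2 * d * (((2 * 2 ^ k)! : ℕ) : ℝ) * Real.exp ((2^k : ℕ) : ℝ)) *
                  ((∑ i, specNorm (A i) ^ 2)^(2^k) / (2 * ((2^k : ℕ) : ℝ))^(2^k)) := by
              field_simp
            rw [hLHSeq]
            have hR : (10 * Real.sqrt (Real.log d) *
                Real.sqrt (∑ i, specNorm (A i) ^ 2)) ^ (2 * 2 ^ k)
                = (100 * Real.log d)^(2^k) * (∑ i, specNorm (A i) ^ 2)^(2^k) := by
              rw [pow_mul, mul_pow, mul_pow]
              have h10 : ((10:ℝ) * Real.sqrt (Real.log d)) ^ 2 = 100 * Real.log d := by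
                rw [mul_pow, Real.sq_sqrt hlogpos.le]
                norm_num
              rw [h10, Real.sq_sqrt hsa0]
            rw [hR]
            calc (2 * d * (((2 * 2 ^ k)! : ℕ) : ℝ) * Real.exp ((2^k : ℕ) : ℝ)) *
                  ((∑ i, specNorm (A i) ^ 2)^(2^k) / (2 * ((2^k : ℕ) : ℝ))^(2^k))
                ≤ ((100 * Real.log d * (2 * ((2^k : ℕ) : ℝ)))^(2^k)) *
                  ((∑ i, specNorm (A i) ^ 2)^(2^k) / (2 * ((2^k : ℕ) : ℝ))^(2^k)) := by
                  refine mul_le_mul_of_nonneg_right ?_ (by positivity)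
                  exact numeric hd hq1 hk1 hk2
              _ = (100 * Real.log d)^(2^k) * (∑ i, specNorm (A i) ^ 2)^(2^k) := by
                  rw [mul_pow]
                  field_simp
    refine le_of_pow_le_pow_left₀ ?_ (by positivity) hfin
    positivity
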